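/- Let b > 0, β > 0, k real, and define u(r) = r^{(k−1)/2} (1 + r/β) exp(−r/β − (b/2) r²). Then u satisfies on (0,∞) the equation −u'' + [(k−1)(k−3)/(4r²) + (2bβ² − (k+1))/(β(r+β)) + (2b/β) r + b² r²] u = E u with E = b(k+2) − 1/β². -/

import Mathlib

theorem stmt_7 (b β k : ℝ) (hb : 0 < b) (hβ : 0 < β)
    (u : ℝ → ℝ)
    (hu : u = fun r : ℝ =>
      r ^ ((k - 1) / 2) * (1 + r / β) * Real.exp (-(r / β) - (b / 2) * r ^ 2))
    (E : ℝ) (hE : E = b * (k + 2) - 1 / β ^ 2) :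
    ∀ r ∈ Set.Ioi (0 : ℝ),
      -(deriv (deriv u) r) +
        ((k - 1) * (k - 3) / (4 * r ^ 2) + (2 * b * β ^ 2 - (k + 1)) / (β * (r + β)) +
          (2 * b / β) * r + b ^ 2 * r ^ 2) * u r = E * u r := by
  subst hu hE
  intro r hr
  simp only [Set.mem_Ioi] at hr
  set p : ℝ := (k - 1) / 2 with hp
  -- derivative of the exponent
  have hw : ∀ x : ℝ, HasDerivAt (fun y : ℝ => -(y / β) - (b / 2) * y ^ 2)
      (-(1 / β) - b * x) x := by
    intro x
    have h1 : HasDerivAt (fun y : ℝ => -(y / β)) (-(1 / β)) x := by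
      exact ((hasDerivAt_id x).div_const β).neg
    have h2 : HasDerivAt (fun y : ℝ => (b / 2) * y ^ 2) ((b / 2) * (2 * x ^ 1)) x := by
      simpa using (hasDerivAt_pow 2 x).const_mul (b / 2)
    have := h1.sub h2
    exact this.congr_deriv (by ring)
  have hf : ∀ x : ℝ, HasDerivAt (fun y : ℝ => 1 + y / β) (1 / β) x := by
    intro x
    exact ((hasDerivAt_const x (1 : ℝ)).add ((hasDerivAt_id x).div_const β)).congr_deriv (by simp)
  -- first derivative
  set D : ℝ → ℝ := fun x =>
    (p * x ^ (p - 1) * (1 + x / β) + x ^ p * (1 / β)) *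
        Real.exp (-(x / β) - (b / 2) * x ^ 2) +
      x ^ p * (1 + x / β) *
        (Real.exp (-(x / β) - (b / 2) * x ^ 2) * (-(1 / β) - b * x)) with hD
  have hDeriv : ∀ x ∈ Set.Ioi (0 : ℝ), HasDerivAt
      (fun r : ℝ => r ^ p * (1 + r / β) * Real.exp (-(r / β) - (b / 2) * r ^ 2))
      (D x) x := by
    intro x hx
    have hx' : (0 : ℝ) < x := hx
    have hr1 : HasDerivAt (fun y : ℝ => y ^ p) (p * x ^ (p - 1)) x :=
      Real.hasDerivAt_rpow_const (Or.inl hx'.ne')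
    exact (hr1.mul (hf x)).mul ((hw x).exp)
  -- second derivative at r
  have hexp2 : p - 1 - 1 = p - 2 := by ring
  have hD1 : HasDerivAt (fun y : ℝ => p * y ^ (p - 1)) (p * ((p - 1) * r ^ (p - 2))) r := by
    have := (Real.hasDerivAt_rpow_const (p := p - 1) (Or.inl hr.ne')).const_mul p
    rwa [hexp2] at this
  have hrp : HasDerivAt (fun y : ℝ => y ^ p) (p * r ^ (p - 1)) r :=
    Real.hasDerivAt_rpow_const (Or.inl hr.ne')
  have hA : HasDerivAt (fun y : ℝ => p * y ^ (p - 1) * (1 + y / β) + y ^ p * (1 / β))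
      (p * ((p - 1) * r ^ (p - 2)) * (1 + r / β) + p * r ^ (p - 1) * (1 / β)
        + p * r ^ (p - 1) * (1 / β)) r :=
    (hD1.mul (hf r)).add (hrp.mul_const (1 / β))
  have hB : HasDerivAt (fun y : ℝ => y ^ p * (1 + y / β))
      (p * r ^ (p - 1) * (1 + r / β) + r ^ p * (1 / β)) r := hrp.mul (hf r)
  have hlin : HasDerivAt (fun y : ℝ => -(1 / β) - b * y) (-b) r := by
    exact ((hasDerivAt_const r (-(1 / β))).sub ((hasDerivAt_id r).const_mul b)).congr_deriv (by simp)
  have hE' : HasDerivAt (fun y : ℝ =>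
      Real.exp (-(y / β) - (b / 2) * y ^ 2) * (-(1 / β) - b * y))
      (Real.exp (-(r / β) - (b / 2) * r ^ 2) * (-(1 / β) - b * r) * (-(1 / β) - b * r) +
        Real.exp (-(r / β) - (b / 2) * r ^ 2) * (-b)) r :=
    ((hw r).exp).mul hlin
  have hD2 := (hA.mul ((hw r).exp)).add (hB.mul hE')
  -- replace deriv (deriv u) r
  have hud : Set.EqOn (deriv (fun r : ℝ =>
      r ^ p * (1 + r / β) * Real.exp (-(r / β) - (b / 2) * r ^ 2))) D (Set.Ioi 0) :=
    fun x hx => (hDeriv x hx).deriv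
  have hev : (deriv (fun r : ℝ =>
      r ^ p * (1 + r / β) * Real.exp (-(r / β) - (b / 2) * r ^ 2))) =ᶠ[nhds r] D :=
    Filter.eventuallyEq_of_mem (isOpen_Ioi.mem_nhds hr) hud
  rw [hev.deriv_eq, show deriv D r = _ from hD2.deriv]
  -- algebra
  have h1 : r ^ p = r ^ (p - 2) * r ^ 2 := by
    rw [← Real.rpow_natCast r 2, ← Real.rpow_add hr]
    norm_num
  have h2 : r ^ (p - 1) = r ^ (p - 2) * r := by
    rw [show p - 1 = (p - 2) + 1 by ring, Real.rpow_add hr, Real.rpow_one]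
  simp only []
  rw [h1, h2, hp]
  have hrb : r + β ≠ 0 := by positivity
  field_simp
  ring
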